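/- Let A be a complete normed ring (Banach algebra), γ ∈ [0,1), Δ ≥ 0 with γΔ < 1, and ε ≥ 0. Let T, T', Z, Z' ∈ A satisfy ‖T‖ ≤ Δ, ‖T'‖ ≤ Δ, ‖Z‖ ≤ Δ, ‖Z'‖ ≤ Δ, ‖T' − T‖ ≤ ε and ‖Z' − Z‖ ≤ ε. Then the series F = ∑_{r=0}^∞ γ^r · T^r · (T − Z) and F' = ∑_{r=0}^∞ γ^r · T'^r · (T' − Z') converge absolutely in A and ‖F' − F‖ ≤ 2ε/(1 − γΔ)². -/

import Mathlib

/-- In a complete normed ring (Banach algebra over ℝ), for `γ ∈ [0,1)`, `Δ ≥ 0` with `γΔ < 1`,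
`ε ≥ 0`, and `T, T', Z, Z'` with norms bounded by `Δ`, `‖T' - T‖ ≤ ε`, `‖Z' - Z‖ ≤ ε`,
the series `F = ∑_{r=0}^∞ γ^r T^r (T - Z)` and `F' = ∑_{r=0}^∞ γ^r T'^r (T' - Z')`
converge absolutely and `‖F' - F‖ ≤ 2ε/(1 - γΔ)²`. -/
theorem stmt_1 {A : Type*} [NormedRing A] [NormedAlgebra ℝ A] [CompleteSpace A]
    (γ Δ ε : ℝ) (hγ0 : 0 ≤ γ) (hγ1 : γ < 1) (hΔ : 0 ≤ Δ) (hγΔ : γ * Δ < 1) (hε : 0 ≤ ε)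
    (T T' Z Z' : A)
    (hT : ‖T‖ ≤ Δ) (hT' : ‖T'‖ ≤ Δ) (hZ : ‖Z‖ ≤ Δ) (hZ' : ‖Z'‖ ≤ Δ)
    (hTT : ‖T' - T‖ ≤ ε) (hZZ : ‖Z' - Z‖ ≤ ε) :
    (Summable fun r : ℕ => ‖γ ^ r • (T ^ r * (T - Z))‖) ∧
    (Summable fun r : ℕ => ‖γ ^ r • (T' ^ r * (T' - Z'))‖) ∧
    ‖(∑' r : ℕ, γ ^ r • (T' ^ r * (T' - Z'))) - ∑' r : ℕ, γ ^ r • (T ^ r * (T - Z))‖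
      ≤ 2 * ε / (1 - γ * Δ) ^ 2 := by
  set x : ℝ := γ * Δ with hxdef
  have hx0 : (0:ℝ) ≤ x := mul_nonneg hγ0 hΔ
  -- powers times an element
  have hpow : ∀ (a : A), ‖a‖ ≤ Δ → ∀ (r : ℕ) (w : A), ‖a ^ r * w‖ ≤ Δ ^ r * ‖w‖ := by
    intro a ha r
    induction r with
    | zero => intro w; simp
    | succ n ih =>
        intro w
        rw [pow_succ, mul_assoc]
        calc ‖a ^ n * (a * w)‖ ≤ Δ ^ n * ‖a * w‖ := ih _
          _ ≤ Δ ^ n * (Δ * ‖w‖) := by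
              gcongr
              exact (norm_mul_le a w).trans (by gcongr)
          _ = Δ ^ (n + 1) * ‖w‖ := by ring
  -- summability helper
  have hsummable : ∀ (a b : A), ‖a‖ ≤ Δ → ‖b‖ ≤ Δ →
      Summable fun r : ℕ => ‖γ ^ r • (a ^ r * (a - b))‖ := by
    intro a b ha hb
    have hab : ‖a - b‖ ≤ 2 * Δ := by
      calc ‖a - b‖ ≤ ‖a‖ + ‖b‖ := norm_sub_le a b
        _ ≤ 2 * Δ := by linarith
    refine Summable.of_nonneg_of_le (fun r => norm_nonneg _) (fun r => ?_)
      ((summable_geometric_of_lt_one hx0 hγΔ).mul_left (2 * Δ))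
    rw [norm_smul, norm_pow, Real.norm_eq_abs, abs_of_nonneg hγ0]
    calc γ ^ r * ‖a ^ r * (a - b)‖ ≤ γ ^ r * (Δ ^ r * (2 * Δ)) :=
          mul_le_mul_of_nonneg_left ((hpow a ha r _).trans (by gcongr)) (pow_nonneg hγ0 r)
      _ = 2 * Δ * x ^ r := by rw [hxdef, mul_pow]; ring
  have hS : Summable fun r : ℕ => ‖γ ^ r • (T ^ r * (T - Z))‖ := hsummable T Z hT hZ
  have hS' : Summable fun r : ℕ => ‖γ ^ r • (T' ^ r * (T' - Z'))‖ := hsummable T' Z' hT' hZ'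
  refine ⟨hS, hS', ?_⟩
  -- bound on powers' difference
  have hpd : ∀ n : ℕ, ‖T' ^ n - T ^ n‖ * Δ ≤ (n : ℝ) * Δ ^ n * ε := by
    intro n
    induction n with
    | zero => simp
    | succ n ih =>
        have key : T' ^ (n + 1) - T ^ (n + 1)
            = (T' ^ n - T ^ n) * T + T' ^ n * (T' - T) := by
          rw [pow_succ, pow_succ]; noncomm_ring
        have h2 : ‖T' ^ (n + 1) - T ^ (n + 1)‖ ≤ ((n : ℝ) + 1) * Δ ^ n * ε := by
          rw [key]
          have ha : ‖(T' ^ n - T ^ n) * T‖ ≤ (n : ℝ) * Δ ^ n * ε := by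
            have := (norm_mul_le (T' ^ n - T ^ n) T).trans
              (mul_le_mul_of_nonneg_left hT (norm_nonneg _))
            linarith [ih]
          have hb : ‖T' ^ n * (T' - T)‖ ≤ Δ ^ n * ε :=
            (hpow T' hT' n _).trans (by gcongr)
          calc ‖(T' ^ n - T ^ n) * T + T' ^ n * (T' - T)‖
              ≤ ‖(T' ^ n - T ^ n) * T‖ + ‖T' ^ n * (T' - T)‖ := norm_add_le _ _
            _ ≤ ((n : ℝ) + 1) * Δ ^ n * ε := by linarith
        calc ‖T' ^ (n + 1) - T ^ (n + 1)‖ * Δ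
            ≤ (((n : ℝ) + 1) * Δ ^ n * ε) * Δ := by
              gcongr
          _ = ((n : ℝ) + 1) * Δ ^ (n + 1) * ε := by ring
          _ = ((n + 1 : ℕ) : ℝ) * Δ ^ (n + 1) * ε := by push_cast; ring
  -- termwise bound on the difference
  have hterm : ∀ r : ℕ,
      ‖γ ^ r • (T' ^ r * (T' - Z')) - γ ^ r • (T ^ r * (T - Z))‖
        ≤ 2 * ε * (((r : ℝ) + 1) * x ^ r) := by
    intro r
    have hdecomp : T' ^ r * (T' - Z') - T ^ r * (T - Z)
        = (T' ^ r - T ^ r) * (T - Z) + T' ^ r * ((T' - Z') - (T - Z)) := by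
      noncomm_ring
    have hTZ : ‖T - Z‖ ≤ 2 * Δ := by
      calc ‖T - Z‖ ≤ ‖T‖ + ‖Z‖ := norm_sub_le T Z
        _ ≤ 2 * Δ := by linarith
    have hdd : ‖(T' - Z') - (T - Z)‖ ≤ 2 * ε := by
      have h3 : (T' - Z') - (T - Z) = (T' - T) - (Z' - Z) := by abel
      rw [h3]
      calc ‖(T' - T) - (Z' - Z)‖ ≤ ‖T' - T‖ + ‖Z' - Z‖ := norm_sub_le _ _
        _ ≤ 2 * ε := by linarith
    have h1 : ‖(T' ^ r - T ^ r) * (T - Z)‖ ≤ 2 * ((r : ℝ) * Δ ^ r * ε) := by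
      calc ‖(T' ^ r - T ^ r) * (T - Z)‖ ≤ ‖T' ^ r - T ^ r‖ * (2 * Δ) :=
            (norm_mul_le _ _).trans (by gcongr)
        _ = 2 * (‖T' ^ r - T ^ r‖ * Δ) := by ring
        _ ≤ 2 * ((r : ℝ) * Δ ^ r * ε) := by have := hpd r; linarith
    have h2 : ‖T' ^ r * ((T' - Z') - (T - Z))‖ ≤ Δ ^ r * (2 * ε) :=
      (hpow T' hT' r _).trans (by gcongr)
    rw [← smul_sub, norm_smul, norm_pow, Real.norm_eq_abs, abs_of_nonneg hγ0, hdecomp]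
    calc γ ^ r * ‖(T' ^ r - T ^ r) * (T - Z) + T' ^ r * ((T' - Z') - (T - Z))‖
        ≤ γ ^ r * (2 * ((r : ℝ) * Δ ^ r * ε) + Δ ^ r * (2 * ε)) :=
          mul_le_mul_of_nonneg_left ((norm_add_le _ _).trans (add_le_add h1 h2))
            (pow_nonneg hγ0 r)
      _ = 2 * ε * (((r : ℝ) + 1) * (γ ^ r * Δ ^ r)) := by ring
      _ = 2 * ε * (((r : ℝ) + 1) * x ^ r) := by rw [hxdef, mul_pow]
  -- the bounding series
  have hxlt : ‖x‖ < 1 := by rw [Real.norm_eq_abs, abs_of_nonneg hx0]; exact hγΔ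
  have hgeo : HasSum (fun r : ℕ => x ^ r) (1 / (1 - x)) := by
    simpa using hasSum_geometric_of_lt_one hx0 hγΔ
  have hmul : HasSum (fun r : ℕ => (r : ℝ) * x ^ r) (x / (1 - x) ^ 2) :=
    hasSum_coe_mul_geometric_of_norm_lt_one hxlt
  have hbig : HasSum (fun r : ℕ => 2 * ε * (((r : ℝ) + 1) * x ^ r))
      (2 * ε / (1 - x) ^ 2) := by
    have h := ((hmul.add hgeo).mul_left (2 * ε))
    have hx1 : (1 : ℝ) - x ≠ 0 := by nlinarith
    convert h using 1
    · rfl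
    · ext r; ring
    · field_simp
      ring
  -- conclude
  have hs1 : Summable fun r : ℕ => γ ^ r • (T ^ r * (T - Z)) := hS.of_norm
  have hs2 : Summable fun r : ℕ => γ ^ r • (T' ^ r * (T' - Z')) := hS'.of_norm
  have hdiffsum : Summable fun r : ℕ =>
      γ ^ r • (T' ^ r * (T' - Z')) - γ ^ r • (T ^ r * (T - Z)) := hs2.sub hs1
  calc ‖(∑' r : ℕ, γ ^ r • (T' ^ r * (T' - Z'))) - ∑' r : ℕ, γ ^ r • (T ^ r * (T - Z))‖
      = ‖∑' r : ℕ, (γ ^ r • (T' ^ r * (T' - Z')) - γ ^ r • (T ^ r * (T - Z)))‖ := by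
        rw [hs2.tsum_sub hs1]
    _ ≤ 2 * ε / (1 - x) ^ 2 := tsum_of_norm_bounded hbig hterm
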